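/- Let ξ, ζ, A, P be positive real numbers with ζ < ξ, and let α ∈ (1, 2). Then for every K with 0 < K < P and K ≤ A, the second derivative of S_α at K is strictly positive: S_α''(K) > 0. In particular, S_α is strictly convex on any subinterval of (0, min{P, A}]. -/

import Mathlib

private lemma G_gt_one (α t : ℝ) (hα1 : 1 < α) (hα2 : α < 2) (ht : 0 < t) :
    1 < α * (α - 1) * t ^ (α - 2) / Real.log 2 + 3 * α * t ^ (α - 1)
      + 2 * Real.log 2 * t ^ α := by
  set c := Real.log 2 with hc
  have hc0 : (0.6931471803 : ℝ) < c := Real.log_two_gt_d9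
  have hc1 : c < 0.6931471808 := Real.log_two_lt_d9
  have hcpos : 0 < c := by linarith
  have hq : 0 < t ^ (α - 2) := Real.rpow_pos_of_pos ht _
  have hr : 0 < t ^ (α - 1) := Real.rpow_pos_of_pos ht _
  have hs : 0 < t ^ α := Real.rpow_pos_of_pos ht _
  have hterm1 : 0 < α * (α - 1) * t ^ (α - 2) / c :=
    div_pos (mul_pos (mul_pos (by linarith) (by linarith)) hq) hcpos
  rcases le_or_gt 1 t with h | h
  · have h1 : (1:ℝ) ≤ t ^ α := Real.one_le_rpow h (by linarith)
    nlinarith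
  rcases le_or_gt (1/3 : ℝ) (t ^ (α - 1)) with h3 | h3
  · nlinarith
  · have hlt : 0 < -Real.log t := by
      have := Real.log_neg ht h
      linarith
    have h3' : Real.log 3 < (α - 1) * (-Real.log t) := by
      have e1 : t ^ (α - 1) = Real.exp (Real.log t * (α - 1)) := by
        rw [Real.rpow_def_of_pos ht]
      have e2 : (1/3 : ℝ) = Real.exp (-Real.log 3) := by
        rw [Real.exp_neg, Real.exp_log (by norm_num : (0:ℝ) < 3)]; norm_num
      rw [e1, e2] at h3
      have := (Real.exp_lt_exp).1 h3
      nlinarith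
    have hlog3 : 1 < Real.log 3 := by
      rw [show (1:ℝ) = Real.log (Real.exp 1) by rw [Real.log_exp]]
      exact Real.log_lt_log (Real.exp_pos 1) (by
        have := Real.exp_one_lt_d9; linarith)
    have hqb : 1 + (2 - α) * (-Real.log t) ≤ t ^ (α - 2) := by
      have e1 : t ^ (α - 2) = Real.exp (Real.log t * (α - 2)) := by
        rw [Real.rpow_def_of_pos ht]
      have := Real.add_one_le_exp (Real.log t * (α - 2))
      rw [e1]
      nlinarith
    have k1 : α * (α - 1) * (1 + (2 - α) * (-Real.log t)) ≤ α * (α - 1) * t ^ (α - 2) :=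
      mul_le_mul_of_nonneg_left hqb (le_of_lt (mul_pos (by linarith) (by linarith)))
    have k2 : α * ((α - 1) + (2 - α) * Real.log 3)
        < α * (α - 1) * (1 + (2 - α) * (-Real.log t)) := by
      have := mul_lt_mul_of_pos_left h3' (mul_pos (show (0:ℝ) < α by linarith)
        (show (0:ℝ) < 2 - α by linarith))
      nlinarith
    have k3 : 1 ≤ (α - 1) + (2 - α) * Real.log 3 := by
      nlinarith [mul_nonneg (show (0:ℝ) ≤ 2 - α by linarith)
        (show (0:ℝ) ≤ Real.log 3 - 1 by linarith)]
    have key : c < α * (α - 1) * t ^ (α - 2) := by nlinarith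
    have : 1 < α * (α - 1) * t ^ (α - 2) / c := by
      rw [lt_div_iff₀ hcpos]
      linarith
    nlinarith

/-- For positive ξ, ζ, A, P with ζ < ξ and α ∈ (1,2), for every K with
0 < K < P and K ≤ A, the second derivative of S_α at K is strictly positive; in particular
S_α is strictly convex on any (convex) subinterval of (0, min{P, A}]. -/
theorem stmt_18 (ξ ζ A P α : ℝ) (hξ : 0 < ξ) (hζ : 0 < ζ) (hA : 0 < A) (hP : 0 < P)
    (hζξ : ζ < ξ) (hα : α ∈ Set.Ioo (1 : ℝ) 2)
    (Sα : ℝ → ℝ)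
    (hSα : Sα = fun K : ℝ => ξ * Real.logb 2 (P / K) ^ α * (A / K) + ζ * Real.logb 2 K) :
    (∀ K : ℝ, 0 < K → K < P → K ≤ A → 0 < deriv (deriv Sα) K) ∧
    (∀ s : Set ℝ, s ⊆ Set.Ioc 0 (min P A) → Convex ℝ s → StrictConvexOn ℝ s Sα) := by
  obtain ⟨hα1, hα2⟩ := hα
  set c := Real.log 2 with hc
  have hcpos : 0 < c := Real.log_pos one_lt_two
  set g1 : ℝ → ℝ := fun x => (ζ/c) * x⁻¹
    - (ξ*A/c) * ((α * ((Real.log P - Real.log x)/c) ^ (α-1)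
        + c * ((Real.log P - Real.log x)/c) ^ α) * (x^2)⁻¹) with hg1def
  -- first derivative on (0, P)
  have hd1 : ∀ x ∈ Set.Ioo (0:ℝ) P, HasDerivAt Sα (g1 x) x := by
    intro x hx
    obtain ⟨hx0, hxP⟩ := hx
    have hux : 0 < (Real.log P - Real.log x) / c :=
      div_pos (sub_pos.2 (Real.log_lt_log hx0 hxP)) hcpos
    set t0 := (Real.log P - Real.log x)/c with ht0
    have hlog := Real.hasDerivAt_log (ne_of_gt hx0)
    have hu : HasDerivAt (fun y => (Real.log P - Real.log y)/c) (-x⁻¹/c) x :=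
      (hlog.const_sub (Real.log P)).div_const c
    have hpow : HasDerivAt (fun y : ℝ => y ^ α) (α * t0 ^ (α-1)) t0 :=
      Real.hasDerivAt_rpow_const (Or.inl (ne_of_gt hux))
    have hcomp := hpow.comp x hu
    have hinv := hasDerivAt_inv (ne_of_gt hx0)
    have hmul := hcomp.mul hinv
    have hF := (hmul.const_mul (ξ*A)).add (hlog.const_mul (ζ/c))
    have hev : Sα =ᶠ[nhds x]
        (fun y => ξ*A*(((fun y => (Real.log P - Real.log y)/c) y) ^ α * y⁻¹)
          + (ζ/c) * Real.log y) := by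
      filter_upwards [Ioo_mem_nhds hx0 hxP] with y hy
      obtain ⟨hy0, hyP⟩ := hy
      simp only [hSα, Real.logb, Real.log_div (ne_of_gt hP) (ne_of_gt hy0), ← hc]
      ring
    have hd := hF.congr_of_eventuallyEq hev
    refine hd.congr_deriv ?_
    rw [hg1def]
    have hx2 : x ≠ 0 := ne_of_gt hx0
    simp only [Function.comp_apply, ht0]
    field_simp
    ring
  -- main claim : positive second derivative
  have main : ∀ K : ℝ, 0 < K → K < P → K ≤ A → 0 < deriv (deriv Sα) K := by
    intro K hK0 hKP hKA
    have ht : 0 < (Real.log P - Real.log K) / c :=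
      div_pos (sub_pos.2 (Real.log_lt_log hK0 hKP)) hcpos
    set t := (Real.log P - Real.log K)/c with htdef
    have hu : HasDerivAt (fun y => (Real.log P - Real.log y)/c) (-K⁻¹/c) K :=
      ((Real.hasDerivAt_log (ne_of_gt hK0)).const_sub (Real.log P)).div_const c
    have hp1 : HasDerivAt (fun y : ℝ => y ^ (α-1)) ((α-1) * t ^ (α-2)) t := by
      have := Real.hasDerivAt_rpow_const (x := t) (p := α-1) (Or.inl (ne_of_gt ht))
      rwa [show α - 1 - 1 = α - 2 by ring] at this
    have hp2 : HasDerivAt (fun y : ℝ => y ^ α) (α * t ^ (α-1)) t :=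
      Real.hasDerivAt_rpow_const (Or.inl (ne_of_gt ht))
    have hc1 := hp1.comp K hu
    have hc2 := hp2.comp K hu
    have hN := (hc1.const_mul α).add (hc2.const_mul c)
    have hinv2 := (hasDerivAt_pow 2 K).inv (pow_ne_zero 2 (ne_of_gt hK0))
    have hMul := hN.mul hinv2
    have hg1' := ((hasDerivAt_inv (ne_of_gt hK0)).const_mul (ζ/c)).sub
      (hMul.const_mul (ξ*A/c))
    simp only [Function.comp, Pi.add_def, Pi.mul_def, Pi.inv_def, Pi.sub_def] at hg1'
    rw [← htdef, ← hg1def] at hg1'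
    have hev2 : deriv Sα =ᶠ[nhds K] g1 := by
      filter_upwards [Ioo_mem_nhds hK0 hKP] with y hy using (hd1 y hy).deriv
    rw [Filter.EventuallyEq.deriv_eq hev2, hg1'.deriv]
    have hrel1 : t ^ (α-1) = t ^ (α-2) * t := by
      rw [show α - 1 = α - 2 + 1 by ring, Real.rpow_add_one (ne_of_gt ht)]
    have hrel2 : t ^ α = t ^ (α-2) * t * t := by
      have h := Real.rpow_add_one (ne_of_gt ht) (α - 1)
      rw [show α - 1 + 1 = α by ring] at h
      rw [h, hrel1]
    have hG := G_gt_one α t hα1 hα2 ht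
    rw [← hc] at hG
    rw [hrel1, hrel2] at hG ⊢
    have hq : 0 < t ^ (α-2) := Real.rpow_pos_of_pos ht _
    have hG' : c < α * (α - 1) * (t^(α-2)) + 3 * α * (t^(α-2) * t) * c
        + 2 * c * (t^(α-2) * t * t) * c := by
      have e : α * (α - 1) * (t^(α-2)) / c * c = α * (α - 1) * (t^(α-2)) :=
        div_mul_cancel₀ _ (ne_of_gt hcpos)
      nlinarith [mul_lt_mul_of_pos_right hG hcpos]
    have hmain : ζ * c * K < ξ * A * (α * (α - 1) * (t^(α-2)) + 3 * α * (t^(α-2) * t) * c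
        + 2 * c * (t^(α-2) * t * t) * c) := by
      have h1 := mul_lt_mul_of_pos_left hG' (mul_pos hξ hA)
      nlinarith [mul_lt_mul_of_pos_right hζξ (mul_pos hcpos hK0),
        mul_le_mul_of_nonneg_left hKA (le_of_lt (mul_pos hξ hcpos))]
    have hpos2 : 0 < (ξ * A * (α * (α - 1) * (t^(α-2)) + 3 * α * (t^(α-2) * t) * c
        + 2 * c * (t^(α-2) * t * t) * c) - ζ * c * K) / (c^2 * K^3) :=
      div_pos (by linarith) (by positivity)
    convert hpos2 using 1
    push_cast
    field_simp
    ring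
  refine ⟨main, ?_⟩
  intro s hs hconv
  have hposx : ∀ x ∈ s, 0 < x := fun x hx => (hs hx).1
  refine strictConvexOn_of_deriv2_pos hconv ?_ ?_
  · rw [hSα]
    have hlogb1 : ContinuousOn (fun x : ℝ => Real.logb 2 (P / x)) s := by
      simp only [Real.logb]
      exact ((continuousOn_const.div continuousOn_id fun x hx => (hposx x hx).ne').log
        fun x hx => (div_pos hP (hposx x hx)).ne').div_const _
    have hlogb2 : ContinuousOn (fun x : ℝ => Real.logb 2 x) s := by
      simp only [Real.logb]
      exact (Real.continuousOn_log.mono (by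
        intro x hx
        exact (hposx x hx).ne')).div_const _
    exact ((continuousOn_const.mul (hlogb1.rpow_const fun x hx =>
      Or.inr (by linarith))).mul
      (continuousOn_const.div continuousOn_id fun x hx => (hposx x hx).ne')).add
      (continuousOn_const.mul hlogb2)
  · intro x hx
    have hx' : x ∈ Set.Ioo (0:ℝ) (min P A) := by
      have h := interior_mono hs hx
      rwa [interior_Ioc] at h
    have hm := main x hx'.1 (lt_of_lt_of_le hx'.2 (min_le_left P A))
      ((lt_of_lt_of_le hx'.2 (min_le_right P A)).le)
    exact hm
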